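/- Let r, g ∈ O_K be nonzero elements and set 𝔞 = (r) + (g). For a nonzero prime ideal p and a nonzero y ∈ O_K, let v_p(y) be the largest t ≥ 0 with y ∈ p^t, and for a nonzero ideal c let v_p(c) be the largest t ≥ 0 with c ⊆ p^t. Let x ∈ O_K be such that for every prime ideal p containing 𝔞: x ∈ p if v_p(r) = v_p(g), and x ∉ p if v_p(r) ≠ v_p(g). Then for every prime ideal p containing 𝔞 one has r + xg ∈ p^{v_p(𝔞)} and r + xg ∉ p^{v_p(𝔞)+1} (in particular v_p(r + xg) = v_p(𝔞)). -/

import Mathlib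

open NumberField

/-- `v_p(y)`: the largest `t ≥ 0` with `y ∈ p^t` (junk value via `sSup` otherwise). -/
noncomputable def pvalElem {K : Type*} [Field K] [NumberField K]
    (p : Ideal (𝓞 K)) (y : 𝓞 K) : ℕ :=
  sSup {t : ℕ | y ∈ p ^ t}

/-- `v_p(c)`: the largest `t ≥ 0` with `c ⊆ p^t` (junk value via `sSup` otherwise). -/
noncomputable def pvalIdeal {K : Type*} [Field K] [NumberField K]
    (p c : Ideal (𝓞 K)) : ℕ :=
  sSup {t : ℕ | c ≤ p ^ t}

lemma pval_spec {K : Type*} [Field K] [NumberField K]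
    (p : Ideal (𝓞 K)) (hp : p ≠ ⊥) (hpp : p.IsPrime) (c : Ideal (𝓞 K)) (hc : c ≠ ⊥) :
    ∀ t : ℕ, c ≤ p ^ t ↔ t ≤ pvalIdeal p c := by
  have hprime : Prime p := Ideal.prime_of_isPrime hp hpp
  obtain ⟨n, hn⟩ := FiniteMultiplicity.of_prime_left hprime (by simpa using hc)
  have hbdd : ∀ t, c ≤ p ^ t → t ≤ n := by
    intro t ht
    by_contra h
    push_neg at h
    exact hn ((Ideal.dvd_iff_le).mpr (le_trans ht (Ideal.pow_le_pow_right h)))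
  have h0 : (0 : ℕ) ∈ {t : ℕ | c ≤ p ^ t} := by simp
  have hBdd : BddAbove {t : ℕ | c ≤ p ^ t} := ⟨n, fun t ht => hbdd t ht⟩
  have hmem : c ≤ p ^ (pvalIdeal p c) := Nat.sSup_mem ⟨0, h0⟩ hBdd
  intro t
  constructor
  · intro ht
    exact le_csSup hBdd ht
  · intro ht
    exact le_trans hmem (Ideal.pow_le_pow_right ht)

lemma pvalElem_eq {K : Type*} [Field K] [NumberField K]
    (p : Ideal (𝓞 K)) (y : 𝓞 K) :
    pvalElem p y = pvalIdeal p (Ideal.span {y}) := by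
  unfold pvalElem pvalIdeal
  congr 1
  ext t
  simp [Ideal.span_singleton_le_iff_mem]

/-- **Lemma.** If `x` lies in every prime `p ⊇ 𝔞 = (r) + (g)` with `v_p(r) = v_p(g)` and
avoids every prime `p ⊇ 𝔞` with `v_p(r) ≠ v_p(g)`, then `v_p(r + x·g) = v_p(𝔞)` for every
prime `p ⊇ 𝔞`. -/
theorem valuation_of_combination
    (K : Type*) [Field K] [NumberField K]
    (r g : 𝓞 K) (hr : r ≠ 0) (hg : g ≠ 0)
    (x : 𝓞 K)
    (hx : ∀ p : Ideal (𝓞 K), p ≠ ⊥ → p.IsPrime →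
      Ideal.span {r} ⊔ Ideal.span {g} ≤ p →
      ((pvalElem p r = pvalElem p g → x ∈ p) ∧ (pvalElem p r ≠ pvalElem p g → x ∉ p))) :
    ∀ p : Ideal (𝓞 K), p ≠ ⊥ → p.IsPrime →
      Ideal.span {r} ⊔ Ideal.span {g} ≤ p →
      r + x * g ∈ p ^ (pvalIdeal p (Ideal.span {r} ⊔ Ideal.span {g})) ∧
      r + x * g ∉ p ^ (pvalIdeal p (Ideal.span {r} ⊔ Ideal.span {g}) + 1) := by
  intro p hp0 hpp hle
  have hprime : Prime p := Ideal.prime_of_isPrime hp0 hpp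
  have hr0 : Ideal.span {r} ≠ (⊥ : Ideal (𝓞 K)) := by
    simpa [Ideal.span_singleton_eq_bot] using hr
  have hg0 : Ideal.span {g} ≠ (⊥ : Ideal (𝓞 K)) := by
    simpa [Ideal.span_singleton_eq_bot] using hg
  have hR := pval_spec p hp0 hpp (Ideal.span {r}) hr0
  have hG := pval_spec p hp0 hpp (Ideal.span {g}) hg0
  set a := pvalIdeal p (Ideal.span {r}) with ha
  set b := pvalIdeal p (Ideal.span {g}) with hb
  -- characterization of pvalIdeal of the sup
  have hmin : pvalIdeal p (Ideal.span {r} ⊔ Ideal.span {g}) = min a b := by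
    unfold pvalIdeal
    have hset : {t : ℕ | Ideal.span {r} ⊔ Ideal.span {g} ≤ p ^ t} = Set.Iic (min a b) := by
      ext t
      simp only [Set.mem_setOf_eq, sup_le_iff, Set.mem_Iic, le_min_iff, hR t, hG t]
    rw [hset, csSup_Iic]
  -- basic facts
  have hra : r ∈ p ^ a := by
    rw [← Ideal.span_singleton_le_iff_mem]; exact (hR a).mpr le_rfl
  have hrb : r ∉ p ^ (a + 1) := by
    rw [← Ideal.span_singleton_le_iff_mem]
    intro h
    simpa using (hR (a + 1)).mp h
  have hga : g ∈ p ^ b := by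
    rw [← Ideal.span_singleton_le_iff_mem]; exact (hG b).mpr le_rfl
  have hgb : g ∉ p ^ (b + 1) := by
    rw [← Ideal.span_singleton_le_iff_mem]
    intro h
    simpa using (hG (b + 1)).mp h
  have hxp := hx p hp0 hpp hle
  rw [pvalElem_eq, pvalElem_eq, ← ha, ← hb] at hxp
  rw [hmin]
  rcases lt_trichotomy a b with hab | hab | hab
  · -- a < b : x ∉ p, min = a, x*g ∈ p^(a+1)
    have hm : min a b = a := min_eq_left hab.le
    rw [hm]
    have hxg : x * g ∈ p ^ (a + 1) :=
      Ideal.mul_mem_left _ x (Ideal.pow_le_pow_right hab hga)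
    constructor
    · exact add_mem hra (Ideal.pow_le_pow_right (Nat.le_succ a) hxg)
    · intro h
      exact hrb (by simpa using sub_mem h hxg)
  · -- a = b : x ∈ p, min = a, x*g ∈ p^(a+1)
    have hm : min a b = a := min_eq_left hab.le
    rw [hm]
    have hxmem : x ∈ p := hxp.1 hab
    have hxg : x * g ∈ p ^ (a + 1) := by
      rw [pow_succ']
      exact Ideal.mul_mem_mul hxmem (hab ▸ hga)
    constructor
    · exact add_mem hra (Ideal.pow_le_pow_right (Nat.le_succ a) hxg)
    · intro h
      exact hrb (by simpa using sub_mem h hxg)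
  · -- b < a : x ∉ p, min = b
    have hm : min a b = b := min_eq_right hab.le
    rw [hm]
    have hxmem : x ∉ p := hxp.2 (by omega)
    have hxg : x * g ∈ p ^ b := Ideal.mul_mem_left _ x hga
    have hxgn : x * g ∉ p ^ (b + 1) := by
      intro h
      have hdvd : p ^ (b + 1) ∣ Ideal.span {x} * Ideal.span {g} := by
        rw [Ideal.span_singleton_mul_span_singleton, Ideal.dvd_iff_le,
          Ideal.span_singleton_le_iff_mem]
        exact h
      have hnp : ¬ p ∣ Ideal.span {x} := by
        rw [Ideal.dvd_iff_le, Ideal.span_singleton_le_iff_mem]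
        exact hxmem
      have := hprime.pow_dvd_of_dvd_mul_left _ hnp hdvd
      rw [Ideal.dvd_iff_le, Ideal.span_singleton_le_iff_mem] at this
      exact hgb this
    constructor
    · exact add_mem (Ideal.pow_le_pow_right hab.le hra) hxg
    · intro h
      have : x * g ∈ p ^ (b + 1) := by
        have hrm : r ∈ p ^ (b + 1) := Ideal.pow_le_pow_right hab hra
        simpa using sub_mem h hrm
      exact hxgn this
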